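/- Let X be an integrable random vector in ℝ^d and Z a random variable taking finitely many values j ∈ {1,...,k}, each with positive probability, such that the conditional mean E[X | Z = j] equals E[X] for every j. Then for any convex loss L : ℝ^k × {1,...,k} → [0,∞) and any affine predictor η(x) = b + W x, the expected loss E[L(η(X), Z)] is at least the infimum over constant vectors c ∈ ℝ^k of E[L(c, Z)]. -/

import Mathlib

open Matrix MeasureTheory

/-- **Equal class centroids imply the trivially attainable loss is optimal.**
Let `X` be an integrable random vector in `ℝ^d` and `Z` a random variable with
values in `Fin k`, each class having positive probability, such that the
class-conditional mean of `X` on each event `{Z = j}` equals the unconditional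
mean, i.e. `∫_{Z=j} X = P(Z=j) • E[X]`.  Then for any loss
`L : ℝ^k × Fin k → [0,∞)` convex in its first argument and any affine predictor
`η(x) = b + W x` (with integrable loss), the expected loss
`E[L(b + W X, Z)]` is at least the infimum over constants `c ∈ ℝ^k` of
`E[L(c, Z)]` (the trivially attainable loss). -/
theorem equal_centroids_imply_trivial_loss_optimal {d k : ℕ}
    {Ω : Type*} [MeasurableSpace Ω] (μ : Measure Ω) [IsProbabilityMeasure μ]
    (X : Ω → Fin d → ℝ) (Z : Ω → Fin k)
    (hZmeas : Measurable Z)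
    (hXint : ∀ i, Integrable (fun ω => X ω i) μ)
    (hZpos : ∀ j : Fin k, 0 < μ {ω | Z ω = j})
    -- each class-conditional mean equals the unconditional mean
    (hmeans : ∀ j : Fin k, ∀ i : Fin d,
      ∫ ω in {ω | Z ω = j}, X ω i ∂μ = (μ {ω | Z ω = j}).toReal * ∫ ω, X ω i ∂μ)
    (L : (Fin k → ℝ) → Fin k → ℝ)
    (hLnonneg : ∀ η j, 0 ≤ L η j)
    (hLconvex : ∀ j : Fin k, ConvexOn ℝ Set.univ (fun η => L η j))
    (b : Fin k → ℝ) (W : Matrix (Fin k) (Fin d) ℝ)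
    (hint : Integrable (fun ω => L (b + W *ᵥ X ω) (Z ω)) μ) :
    (⨅ c : Fin k → ℝ, ∫ ω, L c (Z ω) ∂μ) ≤ ∫ ω, L (b + W *ᵥ X ω) (Z ω) ∂μ := by
  classical
  set S : Fin k → Set Ω := fun j => {ω | Z ω = j} with hSdef
  have hS : ∀ j, MeasurableSet (S j) := fun j => hZmeas (measurableSet_singleton j)
  set p : Fin k → ℝ := fun j => (μ (S j)).toReal with hpdef
  have hp : ∀ j, 0 < p j := fun j =>
    ENNReal.toReal_pos (hZpos j).ne' (measure_ne_top μ _)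
  set m : Fin d → ℝ := fun i => ∫ ω, X ω i ∂μ with hmdef
  set v : Fin d → (Fin k → ℝ) := fun i => fun j => W j i with hvdef
  set cstar : Fin k → ℝ := b + W *ᵥ m with hcdef
  -- rewrite predictor as a sum of scalar-multiples
  have hfeq : ∀ (x : Fin d → ℝ), b + W *ᵥ x = b + ∑ i, x i • v i := by
    intro x
    funext j
    simp [Matrix.mulVec, dotProduct, Finset.sum_apply, mul_comm]
    rfl
  -- decomposition of an integral over the classes
  have hdecomp : ∀ (h : Ω → ℝ), Integrable h μ →
      ∫ ω, h ω ∂μ = ∑ j, ∫ ω in S j, h ω ∂μ := by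
    intro h hh
    have hpt : ∀ ω, h ω = ∑ j, (S j).indicator h ω := by
      intro ω
      rw [Finset.sum_eq_single (Z ω)]
      · rw [Set.indicator_of_mem (by simp [hSdef])]
      · intro j _ hj
        exact Set.indicator_of_notMem (by simp [hSdef, Ne.symm hj]) h
      · intro hmem; exact absurd (Finset.mem_univ _) hmem
    calc ∫ ω, h ω ∂μ = ∫ ω, ∑ j, (S j).indicator h ω ∂μ := by
          exact integral_congr_ae (Filter.Eventually.of_forall hpt)
      _ = ∑ j, ∫ ω, (S j).indicator h ω ∂μ :=
          integral_finset_sum _ (fun j _ => hh.indicator (hS j))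
      _ = ∑ j, ∫ ω in S j, h ω ∂μ := by
          refine Finset.sum_congr rfl fun j _ => ?_
          exact integral_indicator (hS j)
  -- per-class Jensen inequality
  have hjensen : ∀ j, p j * L cstar j ≤ ∫ ω in S j, L (b + W *ᵥ X ω) (Z ω) ∂μ := by
    intro j
    set ν : Measure Ω := μ.restrict (S j) with hνdef
    have hνuniv : ν Set.univ = μ (S j) := by
      rw [hνdef, Measure.restrict_apply MeasurableSet.univ, Set.univ_inter]
    haveI : NeZero ν := ⟨by
      intro h
      have := hZpos j
      rw [← hνuniv, h] at this
      simp at this⟩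
    set f : Ω → (Fin k → ℝ) := fun ω => b + ∑ i, X ω i • v i with hfdef
    have hfi : Integrable f ν :=
      (integrable_const b).add
        (integrable_finset_sum _ fun i _ => ((hXint i).restrict).smul_const (v i))
    have hgi : Integrable (fun ω => L (f ω) j) ν := by
      refine (hint.restrict (s := S j)).congr ?_
      filter_upwards [ae_restrict_mem (hS j)] with ω hω
      have hω' : Z ω = j := hω
      rw [hfeq (X ω), hω']
    -- compute the average of f
    have hintf : ∫ ω, f ω ∂ν = p j • cstar := by
      rw [hfdef]
      rw [integral_add (integrable_const b)
        (integrable_finset_sum _ fun i _ => ((hXint i).restrict).smul_const (v i))]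
      rw [integral_const, measureReal_def, Measure.restrict_apply MeasurableSet.univ, Set.univ_inter]
      rw [integral_finset_sum _ (fun i _ => ((hXint i).restrict).smul_const (v i))]
      have : ∀ i, ∫ ω, X ω i • v i ∂ν = (p j * m i) • v i := by
        intro i
        rw [integral_smul_const, hνdef, hmeans j i]
      simp_rw [← hνdef, this]
      rw [hcdef, hfeq m, smul_add]
      congr 1
      rw [Finset.smul_sum]
      refine Finset.sum_congr rfl fun i _ => ?_
      rw [smul_smul]
    have havg : ⨍ ω, f ω ∂ν = cstar := by
      rw [average_eq, hintf, measureReal_def, hνuniv]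
      show (p j)⁻¹ • p j • cstar = cstar
      rw [smul_smul, inv_mul_cancel₀ (hp j).ne', one_smul]
    have hJ := (hLconvex j).map_average_le
      ((hLconvex j).continuousOn isOpen_univ) isClosed_univ
      (Filter.Eventually.of_forall fun _ => Set.mem_univ _) hfi hgi
    rw [havg] at hJ
    have havg2 : ⨍ ω, L (f ω) j ∂ν = (p j)⁻¹ * ∫ ω, L (f ω) j ∂ν := by
      rw [average_eq, measureReal_def, hνuniv]
      rfl
    rw [havg2] at hJ
    have heqint : ∫ ω, L (f ω) j ∂ν = ∫ ω in S j, L (b + W *ᵥ X ω) (Z ω) ∂μ := by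
      rw [hνdef]
      refine integral_congr_ae ?_
      filter_upwards [ae_restrict_mem (hS j)] with ω hω
      have hω' : Z ω = j := hω
      rw [hfeq (X ω), hω']
    rw [heqint] at hJ
    have := mul_le_mul_of_nonneg_left hJ (le_of_lt (hp j))
    rwa [← mul_assoc, mul_inv_cancel₀ (hp j).ne', one_mul] at this
  -- integral of the constant predictor
  have hconst : ∫ ω, L cstar (Z ω) ∂μ = ∑ j, p j * L cstar j := by
    have hint2 : Integrable (fun ω => L cstar (Z ω)) μ := by
      have : (fun ω => L cstar (Z ω)) = fun ω => ∑ j, (S j).indicator (fun _ => L cstar j) ω := by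
        funext ω
        rw [Finset.sum_eq_single (Z ω)]
        · rw [Set.indicator_of_mem (by simp [hSdef])]
        · intro j _ hj
          exact Set.indicator_of_notMem (by simp [hSdef, Ne.symm hj]) _
        · intro hmem; exact absurd (Finset.mem_univ _) hmem
      rw [this]
      exact integrable_finset_sum _ fun j _ => (integrable_const _).indicator (hS j)
    rw [hdecomp _ hint2]
    refine Finset.sum_congr rfl fun j _ => ?_
    have : ∫ ω in S j, L cstar (Z ω) ∂μ = ∫ ω in S j, L cstar j ∂μ := by
      refine integral_congr_ae ?_
      filter_upwards [ae_restrict_mem (hS j)] with ω hω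
      rw [hω]
    rw [this, setIntegral_const, smul_eq_mul, measureReal_def]
  -- put everything together
  have hbdd : BddBelow (Set.range fun c : Fin k → ℝ => ∫ ω, L c (Z ω) ∂μ) := by
    refine ⟨0, ?_⟩
    rintro x ⟨c, rfl⟩
    exact integral_nonneg fun ω => hLnonneg _ _
  refine le_trans (ciInf_le hbdd cstar) ?_
  rw [hconst, hdecomp _ hint]
  exact Finset.sum_le_sum fun j _ => hjensen j
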